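/- Let n be a natural number and let V, V′, W be finite-dimensional complex representations of G = Equiv.Perm (Fin n) with characters χ_V, χ_{V′}, χ_W, such that χ_{V′}(π) = sign(π) · χ_V(π) for every π ∈ G. Then for every integer z, ∑_{π ∈ G} z^{c(π)} · χ_{V′}(π) · χ_W(π) = (−1)^n · ∑_{π ∈ G} (−z)^{c(π)} · χ_V(π) · χ_W(π), where c(π) is the number of orbits of π acting on Fin n. -/
import Mathlib


open CategoryTheory

/-- The number of cycles of a permutation `π` of `Fin n`, counting fixed points as
cycles of length 1: the number of orbits of the action of `π` on `Fin n`. -/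
noncomputable def cycleCount {n : ℕ} (π : Equiv.Perm (Fin n)) : ℕ :=
  Nat.card (MulAction.orbitRel.Quotient (Subgroup.zpowers π) (Fin n))

open Equiv Equiv.Perm in
lemma orbitRel_iff_sameCycle {n : ℕ} (π : Equiv.Perm (Fin n)) (x y : Fin n) :
    MulAction.orbitRel (Subgroup.zpowers π) (Fin n) x y ↔ π.SameCycle y x := by
  rw [MulAction.orbitRel_apply, MulAction.mem_orbit_iff]
  constructor
  · rintro ⟨⟨g, k, rfl⟩, h⟩
    exact ⟨k, h⟩
  · rintro ⟨k, h⟩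
    exact ⟨⟨π ^ k, k, rfl⟩, h⟩

open Equiv Equiv.Perm in
lemma cycleCount_eq {n : ℕ} (π : Equiv.Perm (Fin n)) :
    cycleCount π = Fintype.card {x : Fin n // π x = x} + π.cycleFactorsFinset.card := by
  classical
  have key : Nonempty (MulAction.orbitRel.Quotient (Subgroup.zpowers π) (Fin n) ≃
      {x : Fin n // π x = x} ⊕ π.cycleFactorsFinset) := by
    set f : Fin n → {x : Fin n // π x = x} ⊕ π.cycleFactorsFinset := fun x =>
      if h : π x = x then Sum.inl ⟨x, h⟩
      else Sum.inr ⟨π.cycleOf x, cycleOf_mem_cycleFactorsFinset_iff.2 (mem_support.2 h)⟩ with hf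
    have hconst : ∀ x y : Fin n,
        MulAction.orbitRel (Subgroup.zpowers π) (Fin n) x y → f x = f y := by
      intro x y hxy
      rw [orbitRel_iff_sameCycle] at hxy
      obtain ⟨k, hk⟩ := hxy
      by_cases hy : π y = y
      · have hx : x = y := by
          rw [← hk, zpow_apply_eq_self_of_apply_eq_self hy]
        subst hx
        rfl
      · have hx : ¬ π x = x := by
          intro hx
          apply hy
          have : y = (π ^ (-k)) x := by rw [← hk]; simp
          rw [this, ← Equiv.Perm.mul_apply, ← zpow_one_add]
          rw [show (1 : ℤ) + -k = -k + 1 by ring, zpow_add, zpow_one, Equiv.Perm.mul_apply, hx,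
            zpow_apply_eq_self_of_apply_eq_self hx]
      -- cycleOf equal
        have hcyc : π.cycleOf y = π.cycleOf x := SameCycle.cycleOf_eq ⟨k, hk⟩
        simp [hf, hx, hy, hcyc]
    refine ⟨Equiv.ofBijective (Quotient.lift f (fun x y h => hconst x y h)) ⟨?_, ?_⟩⟩
    · rintro ⟨x⟩ ⟨y⟩ hxy
      change f x = f y at hxy
      have : (MulAction.orbitRel (Subgroup.zpowers π) (Fin n)) x y := ?_
      · exact Quotient.sound this
      rw [orbitRel_iff_sameCycle]
      by_cases hx : π x = x <;> by_cases hy : π y = y <;>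
        simp only [hf, hx, hy, dif_pos, dif_neg, not_false_iff] at hxy
      · cases hxy; exact SameCycle.refl _ _
      · exact absurd hxy (by simp)
      · exact absurd hxy (by simp)
      · -- cycleOf x = cycleOf y, both in support
        have hcyc : π.cycleOf x = π.cycleOf y := by
          have := Sum.inr.inj hxy
          exact Subtype.ext_iff.1 this
        have hxmem : x ∈ (π.cycleOf x).support :=
          mem_support_cycleOf_iff.2 ⟨SameCycle.refl _ _, mem_support.2 hx⟩
        rw [hcyc, mem_support_cycleOf_iff] at hxmem
        exact hxmem.1
    · rintro (⟨x, hx⟩ | ⟨c, hc⟩)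
      · exact ⟨Quotient.mk _ x, by simp [hf, hx]⟩
      · obtain ⟨w, hw⟩ := (mem_cycleFactorsFinset_iff.1 hc).1.nonempty_support
        have hwπ : w ∈ π.support := mem_cycleFactorsFinset_support_le hc hw
        have hcw : c = π.cycleOf w := cycle_is_cycleOf hw hc
        refine ⟨Quotient.mk _ w, ?_⟩
        simp only [Quotient.lift_mk, hf]
        rw [dif_neg (mem_support.1 hwπ)]
        exact congrArg Sum.inr (Subtype.ext hcw.symm)
  obtain ⟨e⟩ := key
  rw [cycleCount, Nat.card_congr e]
  simp [Nat.card_eq_fintype_card]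

open Equiv Equiv.Perm in
lemma sign_eq_pow {n : ℕ} (π : Equiv.Perm (Fin n)) :
    ((Equiv.Perm.sign π : ℤ) : ℂ) = (-1) ^ (n + cycleCount π) := by
  classical
  have h1 : Fintype.card {x : Fin n // π x = x} + π.support.card = n := by
    rw [Fintype.card_subtype]
    have := Finset.card_filter_add_card_filter_not
      (s := (Finset.univ : Finset (Fin n))) (p := fun x => π x = x)
    simpa [Equiv.Perm.support, Fintype.card_fin] using this
  have h2 : cycleCount π = Fintype.card {x : Fin n // π x = x} + π.cycleFactorsFinset.card :=
    cycleCount_eq π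
  have h3 : Multiset.card π.cycleType = π.cycleFactorsFinset.card := by
    rw [cycleType_def, Multiset.card_map]; rfl
  have hsign : Equiv.Perm.sign π = (-1 : ℤˣ) ^ (π.support.card + π.cycleFactorsFinset.card) := by
    rw [sign_of_cycleType, sum_cycleType, h3]
  have : ((Equiv.Perm.sign π : ℤ) : ℂ) = (-1 : ℂ) ^ (π.support.card + π.cycleFactorsFinset.card) := by
    rw [hsign]; push_cast; ring
  rw [this]
  have hpar : n + cycleCount π = (π.support.card + π.cycleFactorsFinset.card)
      + 2 * Fintype.card {x : Fin n // π x = x} := by omega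
  rw [hpar]; simp [pow_add, pow_mul]

/-- Twisting `V` by the sign character (conjugating the Young diagram) relates the
character polynomials by `χ^{λ′μ}(z) = (−1)^n χ^{λμ}(−z)`. -/
theorem character_polynomial_sign_twist (n : ℕ)
    (V V' W : FDRep ℂ (Equiv.Perm (Fin n)))
    (hsign : ∀ π : Equiv.Perm (Fin n),
      V'.character π = (Equiv.Perm.sign π : ℂ) * V.character π)
    (z : ℤ) :
    ∑ π : Equiv.Perm (Fin n),
        (z : ℂ) ^ cycleCount π * V'.character π * W.character π =
      (-1) ^ n * ∑ π : Equiv.Perm (Fin n),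
        (-(z : ℂ)) ^ cycleCount π * V.character π * W.character π := by
  rw [Finset.mul_sum]
  apply Finset.sum_congr rfl
  intro π _
  rw [hsign π]
  have hs : (Equiv.Perm.sign π : ℂ) = (-1) ^ (n + cycleCount π) := by
    have := sign_eq_pow π
    simpa using this
  rw [hs, neg_pow (z : ℂ), pow_add]
  ring
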